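/- The FEO coefficient vector, defined as the coefficient of X_S in the least-squares linear projection of Y_S onto the span of {1, U_1(S),…,U_{S̄−1}(S), X_S}, equals β_F = E[Σ_S]⁻¹ E[Σ_S β_S], and the corresponding intercept (after dropping the centered dummies) is α_F = E[Y_S] − β_Fᵀ μ̄. -/

import Mathlib

open MeasureTheory Matrix Finset

/-- The FEO coefficient vector — the coefficient of `X_S` in the least-squares linear
projection of `Y_S` onto `{1, U_1(S), …, U_{S̄−1}(S), X_S}` — equals
`β_F = E[Σ_S]⁻¹ E[Σ_S β_S]`, and the corresponding intercept (after dropping the centered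
dummies) is `α_F = E[Y_S] − β_Fᵀ μ̄`. -/
theorem stmt2
    {Ω : Type*} [MeasurableSpace Ω] (P : Measure Ω) [IsProbabilityMeasure P]
    (n d : ℕ) (S : Ω → Fin (n + 1)) (hS : Measurable S)
    (X : Ω → Fin d → ℝ) (Y : Ω → ℝ) (ε : Ω → ℝ)
    (p : Fin (n + 1) → ℝ) (μv : Fin (n + 1) → Fin d → ℝ)
    (Sig : Fin (n + 1) → Matrix (Fin d) (Fin d) ℝ)
    (αb : Fin (n + 1) → ℝ) (βb : Fin (n + 1) → Fin d → ℝ)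
    (hp : ∀ s, 0 < p s)
    (hmeas : ∀ s, P {ω | S ω = s} = ENNReal.ofReal (p s))
    (hmean : ∀ s i, ∫ ω in {ω | S ω = s}, X ω i ∂P = p s * μv s i)
    (hcovX : ∀ s i j,
      ∫ ω in {ω | S ω = s}, (X ω i - μv s i) * (X ω j - μv s j) ∂P = p s * Sig s i j)
    (hSigPD : ∀ s, (Sig s).PosDef)
    (hY : ∀ ω, Y ω = αb (S ω) + βb (S ω) ⬝ᵥ X ω + ε ω)
    (hε : ∀ s, ∫ ω in {ω | S ω = s}, ε ω ∂P = 0)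
    (hXε : ∀ s i, ∫ ω in {ω | S ω = s}, (X ω i - μv s i) * ε ω ∂P = 0)
    -- centered bank dummy variables
    (U : Fin n → Ω → ℝ)
    (hU : ∀ i ω, U i ω = (if S ω = i.castSucc then 1 else 0) - p i.castSucc)
    (hint : ∀ (a : ℝ) (l : Fin n → ℝ) (b : Fin d → ℝ),
      Integrable (fun ω => (a + (∑ k, l k * U k ω) + b ⬝ᵥ X ω - Y ω) ^ 2) P)
    (μbar : Fin d → ℝ) (hμbar : μbar = ∑ s, p s • μv s)
    (βF : Fin d → ℝ)
    (hβF : βF = (∑ s, p s • Sig s)⁻¹ *ᵥ (∑ s, p s • (Sig s *ᵥ βb s)))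
    (αF : ℝ) (hαF : αF = (∫ ω, Y ω ∂P) - βF ⬝ᵥ μbar) :
    ∃ δ : Fin n → ℝ, ∀ (a : ℝ) (l : Fin n → ℝ) (b : Fin d → ℝ),
      ∫ ω, (αF + (∑ k, δ k * U k ω) + βF ⬝ᵥ X ω - Y ω) ^ 2 ∂P
        ≤ ∫ ω, (a + (∑ k, l k * U k ω) + b ⬝ᵥ X ω - Y ω) ^ 2 ∂P := by
  classical
  have hAmeas : ∀ s : Fin (n+1), MeasurableSet {ω | S ω = s} :=
    fun s => hS (measurableSet_singleton s)
  have hPA : ∀ s, (P {ω | S ω = s}).toReal = p s := by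
    intro s; rw [hmeas s, ENNReal.toReal_ofReal (hp s).le]
  have hpsum : ∑ s, p s = 1 := by
    have h1 : ∑ s, P (S ⁻¹' {s}) = P Set.univ := by
      have := sum_measure_preimage_singleton (μ := P) (Finset.univ : Finset (Fin (n+1)))
        (fun y _ => hS (measurableSet_singleton y))
      simpa using this
    have h2 : ∑ s, P {ω | S ω = s} = 1 := by
      simpa [Set.preimage, measure_univ] using h1
    have h3 : ∑ s, ENNReal.ofReal (p s) = 1 := by
      simpa [hmeas] using h2
    have h4 := congrArg ENNReal.toReal h3
    rw [ENNReal.toReal_sum (by intro a _; exact ENNReal.ofReal_ne_top)] at h4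
    simpa [ENNReal.toReal_ofReal (hp _).le] using h4
  -- splitting integrals along the partition
  have hsplit : ∀ f : Ω → ℝ, Integrable f P →
      ∫ ω, f ω ∂P = ∑ s, ∫ ω in {ω | S ω = s}, f ω ∂P := by
    intro f hf
    have hcover : (⋃ s : Fin (n+1), {ω | S ω = s}) = Set.univ := by
      ext ω; simp
    have hdisj : Pairwise (Function.onFun Disjoint (fun s : Fin (n+1) => {ω | S ω = s})) := by
      intro a b hab
      refine Set.disjoint_left.mpr ?_
      intro ω h1 h2
      exact hab ((Set.mem_setOf_eq ▸ h1).symm.trans h2)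
    have := integral_iUnion_fintype (μ := P) (f := f)
      (fun s : Fin (n+1) => hAmeas s) hdisj (fun s => hf.integrableOn)
    rw [hcover] at this
    simpa using this
  -- polarization: products of linear functions are integrable
  have key2 : ∀ (a1 : ℝ) (l1 : Fin n → ℝ) (b1 : Fin d → ℝ)
      (a2 : ℝ) (l2 : Fin n → ℝ) (b2 : Fin d → ℝ),
      Integrable (fun ω => (a1 + (∑ k, l1 k * U k ω) + b1 ⬝ᵥ X ω) *
        (a2 + (∑ k, l2 k * U k ω) + b2 ⬝ᵥ X ω)) P := by
    intro a1 l1 b1 a2 l2 b2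
    have h12 := hint (a1 + a2) (fun k => l1 k + l2 k) (b1 + b2)
    have h1 := hint a1 l1 b1
    have h2 := hint a2 l2 b2
    have h0 := hint 0 0 0
    have comb := (((h12.sub h1).sub h2).add h0).const_mul (1/2 : ℝ)
    refine comb.congr (Filter.Eventually.of_forall fun ω => ?_)
    simp only [Pi.add_apply, Pi.sub_apply, Pi.neg_apply, Pi.zero_apply, add_mul,
      Finset.sum_add_distrib, add_dotProduct, zero_mul, Finset.sum_const_zero,
      zero_dotProduct, add_zero, zero_add]
    ring
  have keyY : ∀ (a : ℝ) (l : Fin n → ℝ) (b : Fin d → ℝ),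
      Integrable (fun ω => (a + (∑ k, l k * U k ω) + b ⬝ᵥ X ω) * Y ω) P := by
    intro a l b
    have hA2 := key2 a l b a l b
    have h0 := hint 0 0 0
    have hQ := hint a l b
    have comb := ((hA2.add h0).sub hQ).const_mul (1/2 : ℝ)
    refine comb.congr (Filter.Eventually.of_forall fun ω => ?_)
    simp only [Pi.add_apply, Pi.sub_apply, Pi.neg_apply, Pi.zero_apply, zero_mul,
      Finset.sum_const_zero, zero_dotProduct, add_zero, zero_add]
    ring
  have intY : Integrable Y P := by
    have := keyY 1 0 0
    refine this.congr (Filter.Eventually.of_forall fun ω => ?_)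
    simp
  have intX : ∀ i, Integrable (fun ω => X ω i) P := by
    intro i
    have := key2 0 0 (Pi.single i 1) 1 0 0
    refine this.congr (Filter.Eventually.of_forall fun ω => ?_)
    simp [single_dotProduct]
  have intXX : ∀ i j, Integrable (fun ω => X ω i * X ω j) P := by
    intro i j
    have := key2 0 0 (Pi.single i 1) 0 0 (Pi.single j 1)
    refine this.congr (Filter.Eventually.of_forall fun ω => ?_)
    simp [single_dotProduct]
  have intXY : ∀ i, Integrable (fun ω => X ω i * Y ω) P := by
    intro i
    have := keyY 0 0 (Pi.single i 1)
    refine this.congr (Filter.Eventually.of_forall fun ω => ?_)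
    simp [single_dotProduct]
  -- bounded measurable factors of the form g ∘ S
  have hmeasS : ∀ g : Fin (n+1) → ℝ, Measurable (fun ω => g (S ω)) :=
    fun g => (measurable_of_finite g).comp hS
  have hbddS : ∀ g : Fin (n+1) → ℝ, ∃ C, ∀ ω, ‖g (S ω)‖ ≤ C := by
    intro g
    refine ⟨∑ s, ‖g s‖, fun ω => ?_⟩
    exact Finset.single_le_sum (f := fun s => ‖g s‖) (fun s _ => norm_nonneg _)
      (Finset.mem_univ (S ω))
  have intmulS : ∀ (g : Fin (n+1) → ℝ) (f : Ω → ℝ), Integrable f P →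
      Integrable (fun ω => g (S ω) * f ω) P := by
    intro g f hf
    exact hf.bdd_mul ((hmeasS g).aestronglyMeasurable) (Filter.Eventually.of_forall (hbddS g).choose_spec)
  have intε : Integrable ε P := by
    have heq : ε = fun ω => Y ω - αb (S ω) * 1 - ∑ j, βb (S ω) j * X ω j := by
      funext ω
      rw [hY ω]
      simp [dotProduct]
      ring
    rw [heq]
    exact (intY.sub (intmulS αb (fun _ => (1:ℝ)) (integrable_const 1))).sub
      (integrable_finset_sum _ fun j _ => intmulS (fun s => βb s j) _ (intX j))
  have intXε : ∀ i, Integrable (fun ω => X ω i * ε ω) P := by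
    intro i
    have heq : (fun ω => X ω i * ε ω)
        = fun ω => X ω i * Y ω - (fun s => αb s) (S ω) * X ω i
            - ∑ j, (fun s => βb s j) (S ω) * (X ω i * X ω j) := by
      funext ω
      rw [hY ω]
      simp only [dotProduct, mul_add, Finset.mul_sum]
      rw [show ∑ x, X ω i * (βb (S ω) x * X ω x) = ∑ x, βb (S ω) x * (X ω i * X ω x)
        from Finset.sum_congr rfl fun x _ => by ring]
      ring
    rw [heq]
    exact ((intXY i).sub (intmulS αb _ (intX i))).sub
      (integrable_finset_sum _ fun j _ => intmulS (fun s => βb s j) _ (intXX i j))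
  -- basic group integrals
  have hXc : ∀ s j, ∫ ω in {ω | S ω = s}, (X ω j - μv s j) ∂P = 0 := by
    intro s j
    rw [integral_sub ((intX j).integrableOn) (integrable_const _),
      hmean s j, setIntegral_const, measureReal_def, hPA s, smul_eq_mul, sub_self]
  have hLEY : ∫ ω, Y ω ∂P = ∑ s, p s * (αb s + βb s ⬝ᵥ μv s) := by
    rw [hsplit Y intY]
    refine Finset.sum_congr rfl fun s _ => ?_
    have heq : Set.EqOn Y (fun ω => αb s + ((∑ j, βb s j * X ω j) + ε ω)) {ω | S ω = s} := by
      intro ω hω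
      have hs : S ω = s := hω
      rw [hY ω, hs]
      simp only [dotProduct]
      ring
    rw [setIntegral_congr_fun (hAmeas s) heq]
    have i1 : Integrable (fun ω => ∑ j, βb s j * X ω j) P :=
      integrable_finset_sum _ fun j _ => (intX j).const_mul (βb s j)
    have i2 : Integrable (fun ω => (∑ j, βb s j * X ω j) + ε ω) P := i1.add intε
    rw [integral_add (integrable_const _) i2.integrableOn]
    rw [integral_add i1.integrableOn intε.integrableOn]
    rw [integral_finset_sum _ fun j (_ : j ∈ Finset.univ) =>
        ((intX j).const_mul (βb s j)).integrableOn]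
    rw [setIntegral_const, measureReal_def, hPA s, hε s, smul_eq_mul, add_zero]
    have : ∀ j ∈ Finset.univ, ∫ ω in {ω | S ω = s}, βb s j * X ω j ∂P
        = p s * (βb s j * μv s j) := by
      intro j _
      rw [integral_const_mul, hmean s j]; ring
    rw [Finset.sum_congr rfl this]
    simp only [dotProduct, mul_add, ← Finset.mul_sum]
  set cs : Fin (n + 1) → ℝ := fun s => αb s - (βF - βb s) ⬝ᵥ μv s with hcsdef
  set δ : Fin n → ℝ := fun k => cs k.castSucc - cs (Fin.last n) with hδdef
  have hαFsum : αF = ∑ s, p s * cs s := by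
    rw [hαF, hLEY, hμbar, hcsdef]
    have h1 : βF ⬝ᵥ (∑ s, p s • μv s) = ∑ s, p s * (βF ⬝ᵥ μv s) := by
      simp only [dotProduct, Finset.sum_apply, Pi.smul_apply, smul_eq_mul,
        Finset.mul_sum]
      rw [Finset.sum_comm]
      exact Finset.sum_congr rfl fun s _ => Finset.sum_congr rfl fun i _ => by ring
    rw [h1, ← Finset.sum_sub_distrib]
    exact Finset.sum_congr rfl fun s _ => by simp only [sub_dotProduct]; ring
  have hδp : ∑ k : Fin n, δ k * p k.castSucc = αF - cs (Fin.last n) := by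
    have h5 : ∑ k : Fin n, δ k * p k.castSucc
        = (∑ k : Fin n, p k.castSucc * cs k.castSucc)
          - (∑ k : Fin n, p k.castSucc) * cs (Fin.last n) := by
      rw [Finset.sum_mul, ← Finset.sum_sub_distrib]
      exact Finset.sum_congr rfl fun k _ => by rw [hδdef]; ring
    have h6 : ∑ k : Fin n, p k.castSucc = 1 - p (Fin.last n) := by
      have h := hpsum
      rw [Fin.sum_univ_castSucc] at h
      linarith
    have h7 : ∑ s, p s * cs s
        = (∑ k : Fin n, p k.castSucc * cs k.castSucc) + p (Fin.last n) * cs (Fin.last n) :=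
      Fin.sum_univ_castSucc _
    rw [h5, h6, hαFsum, h7]
    ring
  have hLδ : ∀ s : Fin (n+1),
      αF + (∑ k, δ k * ((if s = k.castSucc then (1:ℝ) else 0) - p k.castSucc)) = cs s := by
    intro s
    induction s using Fin.lastCases with
    | last =>
      have hz : ∑ k : Fin n, δ k * ((if (Fin.last n : Fin (n+1)) = k.castSucc then (1:ℝ) else 0)
          - p k.castSucc) = -∑ k : Fin n, δ k * p k.castSucc := by
        rw [← Finset.sum_neg_distrib]
        refine Finset.sum_congr rfl fun k _ => ?_
        rw [if_neg (Fin.castSucc_lt_last k).ne', mul_comm]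
        ring
      rw [hz, hδp]
      ring
    | cast i =>
      have hind : ∑ k : Fin n, δ k * (if i.castSucc = k.castSucc then (1:ℝ) else 0) = δ i := by
        rw [Finset.sum_eq_single i]
        · rw [if_pos rfl, mul_one]
        · intro k _ hk
          rw [if_neg (fun h => hk (Fin.castSucc_injective _ h).symm), mul_zero]
        · intro h; exact absurd (Finset.mem_univ i) h
      have hz : ∑ k : Fin n, δ k * ((if (i.castSucc : Fin (n+1)) = k.castSucc then (1:ℝ) else 0)
          - p k.castSucc)
          = (∑ k : Fin n, δ k * (if (i.castSucc : Fin (n+1)) = k.castSucc then (1:ℝ) else 0))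
            - ∑ k : Fin n, δ k * p k.castSucc := by
        rw [← Finset.sum_sub_distrib]
        exact Finset.sum_congr rfl fun k _ => by ring
      rw [hz, hind, hδp, hδdef]
      ring
  -- the residual of the FEO projection, group by group
  have hRstar : ∀ (s : Fin (n+1)) (ω : Ω), S ω = s →
      αF + (∑ k, δ k * U k ω) + βF ⬝ᵥ X ω - Y ω
        = (∑ j, (βF j - βb s j) * (X ω j - μv s j)) - ε ω := by
    intro s ω hs
    have hUω : ∀ k : Fin n, U k ω = (if s = k.castSucc then (1:ℝ) else 0) - p k.castSucc := by
      intro k; rw [hU k ω, hs]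
    have h1 : (∑ k, δ k * U k ω) = cs s - αF := by
      have h := hLδ s
      simp only [hUω]
      linarith
    rw [hY ω, hs, h1, hcsdef]
    simp only [dotProduct, Pi.sub_apply, sub_mul, mul_sub, Finset.sum_sub_distrib]
    ring
  have intLstar : Integrable (fun ω => αF + (∑ k, δ k * U k ω) + βF ⬝ᵥ X ω) P := by
    have := key2 αF δ βF 1 0 0
    refine this.congr (Filter.Eventually.of_forall fun ω => ?_)
    simp
  have intRstar : Integrable (fun ω => αF + (∑ k, δ k * U k ω) + βF ⬝ᵥ X ω - Y ω) P :=
    intLstar.sub intY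
  have intXRstar : ∀ i, Integrable
      (fun ω => X ω i * (αF + (∑ k, δ k * U k ω) + βF ⬝ᵥ X ω - Y ω)) P := by
    intro i
    have h1 := key2 0 0 (Pi.single i 1) αF δ βF
    have h2 := keyY 0 0 (Pi.single i 1)
    refine (h1.sub h2).congr (Filter.Eventually.of_forall fun ω => ?_)
    simp only [Pi.sub_apply, Pi.zero_apply, zero_mul, Finset.sum_const_zero,
      single_dotProduct, one_mul, zero_add, add_zero]
    ring
  have hI1 : ∀ s, ∫ ω in {ω | S ω = s},
      (αF + (∑ k, δ k * U k ω) + βF ⬝ᵥ X ω - Y ω) ∂P = 0 := by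
    intro s
    rw [setIntegral_congr_fun (hAmeas s) (fun ω hω => hRstar s ω hω)]
    have i1j : ∀ j : Fin d, Integrable (fun ω => (βF j - βb s j) * (X ω j - μv s j)) P :=
      fun j => ((intX j).sub (integrable_const _)).const_mul _
    have i1 : Integrable (fun ω => ∑ j, (βF j - βb s j) * (X ω j - μv s j)) P :=
      integrable_finset_sum _ fun j _ => i1j j
    rw [integral_sub i1.integrableOn intε.integrableOn, hε s, sub_zero]
    rw [integral_finset_sum _ fun j (_ : j ∈ Finset.univ) => (i1j j).integrableOn]
    refine Finset.sum_eq_zero fun j _ => ?_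
    rw [integral_const_mul, hXc s j, mul_zero]
  have hXXc : ∀ s i j, ∫ ω in {ω | S ω = s}, X ω i * (X ω j - μv s j) ∂P
      = p s * Sig s i j := by
    intro s i j
    have hfe : (fun ω => X ω i * (X ω j - μv s j))
        = fun ω => (X ω i - μv s i) * (X ω j - μv s j) + μv s i * (X ω j - μv s j) :=
      funext fun ω => by ring
    have ia : Integrable (fun ω => (X ω i - μv s i) * (X ω j - μv s j)) P := by
      have base := ((intXX i j).sub ((intX j).const_mul (μv s i))).sub
        (((intX i).const_mul (μv s j)).sub (integrable_const (μv s i * μv s j)))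
      exact base.congr (Filter.Eventually.of_forall fun ω => by
        simp only [Pi.sub_apply]; ring)
    have ib : Integrable (fun ω => μv s i * (X ω j - μv s j)) P :=
      ((intX j).sub (integrable_const _)).const_mul _
    rw [hfe, integral_add ia.integrableOn ib.integrableOn, hcovX s i j,
      integral_const_mul, hXc s j, mul_zero, add_zero]
  have hXec : ∀ s i, ∫ ω in {ω | S ω = s}, X ω i * ε ω ∂P = 0 := by
    intro s i
    have hfe : (fun ω => X ω i * ε ω)
        = fun ω => (X ω i - μv s i) * ε ω + μv s i * ε ω := funext fun ω => by ring
    have ia : Integrable (fun ω => (X ω i - μv s i) * ε ω) P :=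
      ((intXε i).sub (intε.const_mul (μv s i))).congr
        (Filter.Eventually.of_forall fun ω => by simp only [Pi.sub_apply]; ring)
    rw [hfe, integral_add ia.integrableOn ((intε.const_mul _).integrableOn),
      hXε s i, integral_const_mul, hε s, mul_zero, add_zero]
  have hI2 : ∀ s i, ∫ ω in {ω | S ω = s},
      X ω i * (αF + (∑ k, δ k * U k ω) + βF ⬝ᵥ X ω - Y ω) ∂P
        = ∑ j, (βF j - βb s j) * (p s * Sig s i j) := by
    intro s i
    have heq : Set.EqOn
        (fun ω => X ω i * (αF + (∑ k, δ k * U k ω) + βF ⬝ᵥ X ω - Y ω))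
        (fun ω => (∑ j, (βF j - βb s j) * (X ω i * (X ω j - μv s j))) - X ω i * ε ω)
        {ω | S ω = s} := by
      intro ω hω
      have h := hRstar s ω hω
      simp only
      rw [h, mul_sub, Finset.mul_sum]
      congr 1
      exact Finset.sum_congr rfl fun j _ => by ring
    rw [setIntegral_congr_fun (hAmeas s) heq]
    have ia : Integrable (fun ω => ∑ j, (βF j - βb s j) * (X ω i * (X ω j - μv s j))) P := by
      refine integrable_finset_sum _ fun j _ => Integrable.const_mul ?_ _
      exact ((intXX i j).sub ((intX i).const_mul (μv s j))).congr
        (Filter.Eventually.of_forall fun ω => by simp only [Pi.sub_apply]; ring)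
    rw [integral_sub ia.integrableOn ((intXε i).integrableOn), hXec s i, sub_zero]
    rw [integral_finset_sum _ fun j (_ : j ∈ Finset.univ) =>
      (Integrable.const_mul (((intXX i j).sub ((intX i).const_mul (μv s j))).congr
        (Filter.Eventually.of_forall fun ω => by simp only [Pi.sub_apply]; ring)) _).integrableOn]
    exact Finset.sum_congr rfl fun j _ => by rw [integral_const_mul, hXXc s i j]
  -- the matrix identity satisfied by βF
  have hPD : (∑ s, p s • Sig s).PosDef := by
    rw [Matrix.posDef_iff_dotProduct_mulVec]
    constructor
    · ext i j
      simp only [Matrix.conjTranspose_apply, Matrix.sum_apply, Matrix.smul_apply,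
        smul_eq_mul, star_trivial]
      refine Finset.sum_congr rfl fun s _ => ?_
      have h := congrFun (congrFun (hSigPD s).isHermitian i) j
      simp only [Matrix.conjTranspose_apply, star_trivial] at h
      rw [h]
    · intro x hx
      have hmv : (∑ s, p s • Sig s) *ᵥ x = ∑ s, p s • (Sig s *ᵥ x) := by
        funext i
        simp only [Matrix.mulVec, dotProduct, Matrix.sum_apply, Matrix.smul_apply,
          smul_eq_mul, Finset.sum_apply, Pi.smul_apply, Finset.sum_mul, Finset.mul_sum]
        rw [Finset.sum_comm]
        exact Finset.sum_congr rfl fun s _ => Finset.sum_congr rfl fun j _ => by ring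
      have hexp : star x ⬝ᵥ ((∑ s, p s • Sig s) *ᵥ x)
          = ∑ s, p s * (star x ⬝ᵥ (Sig s *ᵥ x)) := by
        rw [hmv]
        simp only [dotProduct, Finset.sum_apply, Pi.smul_apply, smul_eq_mul,
          Finset.mul_sum]
        rw [Finset.sum_comm]
        exact Finset.sum_congr rfl fun s _ => Finset.sum_congr rfl fun i _ => by ring
      rw [hexp]
      exact Finset.sum_pos (fun s _ => mul_pos (hp s) ((hSigPD s).dotProduct_mulVec_pos hx))
        Finset.univ_nonempty
  have hdet : IsUnit (∑ s, p s • Sig s).det := isUnit_iff_ne_zero.mpr hPD.det_pos.ne'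
  have hvec : (∑ s, p s • Sig s) *ᵥ βF = ∑ s, p s • (Sig s *ᵥ βb s) := by
    rw [hβF, Matrix.mulVec_mulVec, Matrix.mul_nonsing_inv _ hdet, Matrix.one_mulVec]
  have Mkey : ∀ i, ∑ s, ∑ j, (βF j - βb s j) * (p s * Sig s i j) = 0 := by
    intro i
    have e2 := congrFun hvec i
    have eL : ((∑ s, p s • Sig s) *ᵥ βF) i = ∑ s, ∑ j, βF j * (p s * Sig s i j) := by
      simp only [Matrix.mulVec, dotProduct, Matrix.sum_apply, Matrix.smul_apply,
        smul_eq_mul, Finset.sum_mul]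
      rw [Finset.sum_comm]
      exact Finset.sum_congr rfl fun s _ => Finset.sum_congr rfl fun j _ => by ring
    have eR : (∑ s, p s • (Sig s *ᵥ βb s)) i = ∑ s, ∑ j, βb s j * (p s * Sig s i j) := by
      simp only [Finset.sum_apply, Pi.smul_apply, smul_eq_mul, Matrix.mulVec,
        dotProduct, Finset.mul_sum]
      exact Finset.sum_congr rfl fun s _ => Finset.sum_congr rfl fun j _ => by ring
    have hsplit2 : ∑ s, ∑ j, (βF j - βb s j) * (p s * Sig s i j)
        = (∑ s, ∑ j, βF j * (p s * Sig s i j)) - ∑ s, ∑ j, βb s j * (p s * Sig s i j) := by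
      rw [← Finset.sum_sub_distrib]
      refine Finset.sum_congr rfl fun s _ => ?_
      rw [← Finset.sum_sub_distrib]
      exact Finset.sum_congr rfl fun j _ => by ring
    rw [hsplit2, ← eL, ← eR, e2, sub_self]
  -- conclusion
  refine ⟨δ, fun a l b => ?_⟩
  have intDR : Integrable (fun ω =>
      ((a - αF) + (∑ k, (l k - δ k) * U k ω) + (b - βF) ⬝ᵥ X ω)
        * (αF + (∑ k, δ k * U k ω) + βF ⬝ᵥ X ω - Y ω)) P := by
    have h1 := key2 (a - αF) (fun k => l k - δ k) (b - βF) αF δ βF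
    have h2 := keyY (a - αF) (fun k => l k - δ k) (b - βF)
    exact (h1.sub h2).congr (Filter.Eventually.of_forall fun ω => by
      simp only [Pi.sub_apply]; ring)
  have hDR : ∫ ω, ((a - αF) + (∑ k, (l k - δ k) * U k ω) + (b - βF) ⬝ᵥ X ω)
      * (αF + (∑ k, δ k * U k ω) + βF ⬝ᵥ X ω - Y ω) ∂P = 0 := by
    rw [hsplit _ intDR]
    have hval : ∀ s : Fin (n+1), ∫ ω in {ω | S ω = s},
        ((a - αF) + (∑ k, (l k - δ k) * U k ω) + (b - βF) ⬝ᵥ X ω)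
          * (αF + (∑ k, δ k * U k ω) + βF ⬝ᵥ X ω - Y ω) ∂P
        = ∑ i, (b i - βF i) * ∑ j, (βF j - βb s j) * (p s * Sig s i j) := by
      intro s
      have heq : Set.EqOn
          (fun ω => ((a - αF) + (∑ k, (l k - δ k) * U k ω) + (b - βF) ⬝ᵥ X ω)
            * (αF + (∑ k, δ k * U k ω) + βF ⬝ᵥ X ω - Y ω))
          (fun ω => ((a - αF) + ∑ k, (l k - δ k)
              * ((if s = k.castSucc then (1:ℝ) else 0) - p k.castSucc))
              * (αF + (∑ k, δ k * U k ω) + βF ⬝ᵥ X ω - Y ω)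
            + ∑ i, (b i - βF i)
              * (X ω i * (αF + (∑ k, δ k * U k ω) + βF ⬝ᵥ X ω - Y ω)))
          {ω | S ω = s} := by
        intro ω hω
        have hs : S ω = s := hω
        have hUω : ∀ k : Fin n, U k ω
            = (if s = k.castSucc then (1:ℝ) else 0) - p k.castSucc := by
          intro k; rw [hU k ω, hs]
        simp only
        have hD : (a - αF) + (∑ k, (l k - δ k) * U k ω) + (b - βF) ⬝ᵥ X ω
            = ((a - αF) + ∑ k, (l k - δ k)
                * ((if s = k.castSucc then (1:ℝ) else 0) - p k.castSucc))
              + ∑ i, (b i - βF i) * X ω i := by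
          simp only [hUω, dotProduct, Pi.sub_apply]
        rw [hD, add_mul, Finset.sum_mul]
        congr 1
        exact Finset.sum_congr rfl fun i _ => by ring
      rw [setIntegral_congr_fun (hAmeas s) heq]
      have i2 : Integrable (fun ω => ∑ i, (b i - βF i)
          * (X ω i * (αF + (∑ k, δ k * U k ω) + βF ⬝ᵥ X ω - Y ω))) P :=
        integrable_finset_sum _ fun i _ => (intXRstar i).const_mul _
      rw [integral_add ((intRstar.const_mul _).integrableOn) i2.integrableOn]
      rw [integral_const_mul, hI1 s, mul_zero, zero_add]
      rw [integral_finset_sum _ fun i (_ : i ∈ Finset.univ) =>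
        ((intXRstar i).const_mul _).integrableOn]
      exact Finset.sum_congr rfl fun i _ => by rw [integral_const_mul, hI2 s i]
    rw [Finset.sum_congr rfl fun s _ => hval s]
    rw [Finset.sum_comm]
    refine Finset.sum_eq_zero fun i _ => ?_
    rw [← Finset.mul_sum, Mkey i, mul_zero]
  have intD2 : Integrable (fun ω =>
      ((a - αF) + (∑ k, (l k - δ k) * U k ω) + (b - βF) ⬝ᵥ X ω) ^ 2) P := by
    have := key2 (a - αF) (fun k => l k - δ k) (b - βF) (a - αF) (fun k => l k - δ k) (b - βF)
    exact this.congr (Filter.Eventually.of_forall fun ω => by ring)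
  have hdecomp : ∀ ω, (a + (∑ k, l k * U k ω) + b ⬝ᵥ X ω - Y ω) ^ 2
      = (αF + (∑ k, δ k * U k ω) + βF ⬝ᵥ X ω - Y ω) ^ 2
        + 2 * (((a - αF) + (∑ k, (l k - δ k) * U k ω) + (b - βF) ⬝ᵥ X ω)
          * (αF + (∑ k, δ k * U k ω) + βF ⬝ᵥ X ω - Y ω))
        + ((a - αF) + (∑ k, (l k - δ k) * U k ω) + (b - βF) ⬝ᵥ X ω) ^ 2 := by
    intro ω
    simp only [sub_mul, Finset.sum_sub_distrib, sub_dotProduct]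
    ring
  have intcross : Integrable (fun ω =>
      2 * (((a - αF) + (∑ k, (l k - δ k) * U k ω) + (b - βF) ⬝ᵥ X ω)
        * (αF + (∑ k, δ k * U k ω) + βF ⬝ᵥ X ω - Y ω))) P := intDR.const_mul 2
  have i1 : Integrable (fun ω =>
      (αF + (∑ k, δ k * U k ω) + βF ⬝ᵥ X ω - Y ω) ^ 2
        + 2 * (((a - αF) + (∑ k, (l k - δ k) * U k ω) + (b - βF) ⬝ᵥ X ω)
          * (αF + (∑ k, δ k * U k ω) + βF ⬝ᵥ X ω - Y ω))) P := (hint αF δ βF).add intcross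
  have expand : ∫ ω, (a + (∑ k, l k * U k ω) + b ⬝ᵥ X ω - Y ω) ^ 2 ∂P
      = ∫ ω, (αF + (∑ k, δ k * U k ω) + βF ⬝ᵥ X ω - Y ω) ^ 2 ∂P
        + 2 * (∫ ω, ((a - αF) + (∑ k, (l k - δ k) * U k ω) + (b - βF) ⬝ᵥ X ω)
          * (αF + (∑ k, δ k * U k ω) + βF ⬝ᵥ X ω - Y ω) ∂P)
        + ∫ ω, ((a - αF) + (∑ k, (l k - δ k) * U k ω) + (b - βF) ⬝ᵥ X ω) ^ 2 ∂P := by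
    simp only [hdecomp]
    rw [integral_add i1 intD2, integral_add (hint αF δ βF) intcross, integral_const_mul]
  have hD2 : 0 ≤ ∫ ω, ((a - αF) + (∑ k, (l k - δ k) * U k ω) + (b - βF) ⬝ᵥ X ω) ^ 2 ∂P :=
    integral_nonneg fun ω => sq_nonneg _
  rw [expand, hDR]
  linarith
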